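/- Let α be an algebraic number of degree n ≥ 2 over a number field K with conjugates α_1,...,α_n, and let v be an archimedean place of K with N_v = [K_v:Q_v]/[K:Q]. Then (1/(n(n−1)))·Σ_{i≠j} (log⁺|α_i|_v + log⁺|α_j|_v − log|α_i−α_j|_v) ≥ −N_v·(log n)/(n−1). -/

import Mathlib

open Classical

section Helpers

open Finset

lemma my_hadamard {m : ℕ} (A : Matrix (Fin m) (Fin m) ℂ) :
    ‖A.det‖ ≤ ∏ j, Real.sqrt (∑ i, ‖A i j‖ ^ 2) := by
  classical
  set v : Fin m → EuclideanSpace ℂ (Fin m) := fun j => WithLp.toLp 2 (fun i => A i j) with hv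
  have hcard : Module.finrank ℂ (EuclideanSpace ℂ (Fin m)) = Fintype.card (Fin m) := by
    simp
  haveI iw : WellFoundedLT (Fin m) := inferInstance
  set b := InnerProductSpace.gramSchmidtOrthonormalBasis hcard v with hbdef
  set e := EuclideanSpace.basisFun (Fin m) ℂ with he
  have hA : e.toBasis.toMatrix v = A := by
    ext i j
    simp [Module.Basis.toMatrix_apply, he, hv]
  have hdet : A.det = (e.toBasis.toMatrix b.toBasis).det * (b.toBasis.toMatrix v).det := by
    rw [← Matrix.det_mul, Module.Basis.toMatrix_mul_toMatrix, hA]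
  have h1 : ‖(e.toBasis.toMatrix b.toBasis).det‖ = 1 := by
    have := e.det_to_matrix_orthonormalBasis b
    rw [Module.Basis.det_apply] at this
    simpa [OrthonormalBasis.coe_toBasis] using this
  have h2 : ‖(b.toBasis.toMatrix v).det‖ ≤ ∏ i, ‖v i‖ := by
    rw [← Module.Basis.det_apply, InnerProductSpace.gramSchmidtOrthonormalBasis_det]
    rw [show ‖∏ i, inner ℂ (b i) (v i)‖ = ∏ i, ‖(inner ℂ (b i) (v i) : ℂ)‖ by
      rw [norm_prod]]
    refine Finset.prod_le_prod (fun i _ => norm_nonneg _) (fun i _ => ?_)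
    calc ‖(inner ℂ (b i) (v i) : ℂ)‖ ≤ ‖b i‖ * ‖v i‖ := norm_inner_le_norm _ _
      _ = ‖v i‖ := by rw [b.orthonormal.1 i, one_mul]
  calc ‖A.det‖
      = ‖(e.toBasis.toMatrix b.toBasis).det‖ *
        ‖(b.toBasis.toMatrix v).det‖ := by rw [hdet, norm_mul]
    _ ≤ 1 * ∏ i, ‖v i‖ := by
        rw [h1]; exact mul_le_mul_of_nonneg_left h2 (by norm_num)
    _ = ∏ j, Real.sqrt (∑ i, ‖A i j‖ ^ 2) := by
        rw [one_mul]
        refine Finset.prod_congr rfl fun j _ => ?_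
        rw [EuclideanSpace.norm_eq]

lemma my_filter_Ioi {n : ℕ} (i : Fin n) :
    Finset.univ.filter (fun j => i < j) = Finset.Ioi i := by
  ext j; simp

lemma my_filter_Iio {n : ℕ} (i : Fin n) :
    Finset.univ.filter (fun j => j < i) = Finset.Iio i := by
  ext j; simp

lemma my_sum_lt {n : ℕ} (F : Fin n → Fin n → ℝ) :
    ∑ ij ∈ Finset.univ.filter (fun ij : Fin n × Fin n => ij.1 < ij.2), F ij.1 ij.2
      = ∑ i, ∑ j ∈ Finset.Ioi i, F i j := by
  rw [Finset.sum_filter, Fintype.sum_prod_type]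
  refine Finset.sum_congr rfl fun i _ => ?_
  rw [← my_filter_Ioi i, Finset.sum_filter]

lemma my_sum_lt_right {n : ℕ} (F : Fin n → Fin n → ℝ) :
    ∑ ij ∈ Finset.univ.filter (fun ij : Fin n × Fin n => ij.1 < ij.2), F ij.1 ij.2
      = ∑ j, ∑ i ∈ Finset.Iio j, F i j := by
  rw [Finset.sum_filter, Fintype.sum_prod_type_right]
  refine Finset.sum_congr rfl fun j _ => ?_
  rw [← my_filter_Iio j, Finset.sum_filter]

lemma my_sum_offdiag_symm {n : ℕ} (f : Fin n → Fin n → ℝ) (hsymm : ∀ i j, f i j = f j i) :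
    ∑ ij ∈ Finset.univ.filter (fun ij : Fin n × Fin n => ij.1 ≠ ij.2), f ij.1 ij.2
      = 2 * ∑ i, ∑ j ∈ Finset.Ioi i, f i j := by
  classical
  have hsplit : Finset.univ.filter (fun ij : Fin n × Fin n => ij.1 ≠ ij.2)
      = Finset.univ.filter (fun ij : Fin n × Fin n => ij.1 < ij.2)
        ∪ Finset.univ.filter (fun ij : Fin n × Fin n => ij.2 < ij.1) := by
    ext ij
    simp only [Finset.mem_filter, Finset.mem_univ, true_and, Finset.mem_union]
    exact ne_iff_lt_or_gt
  have hdisj : Disjoint (Finset.univ.filter (fun ij : Fin n × Fin n => ij.1 < ij.2))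
      (Finset.univ.filter (fun ij : Fin n × Fin n => ij.2 < ij.1)) := by
    rw [Finset.disjoint_filter]
    intro ij _ h1 h2
    exact absurd h1 (not_lt_of_gt h2)
  have hswap : ∑ ij ∈ Finset.univ.filter (fun ij : Fin n × Fin n => ij.2 < ij.1), f ij.1 ij.2
      = ∑ ij ∈ Finset.univ.filter (fun ij : Fin n × Fin n => ij.1 < ij.2), f ij.1 ij.2 := by
    refine Finset.sum_nbij' (fun ij => Prod.swap ij) (fun ij => Prod.swap ij) ?_ ?_ ?_ ?_ ?_ <;>
      simp +contextual [hsymm _ _]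
  rw [hsplit, Finset.sum_union hdisj, hswap, my_sum_lt, two_mul]

lemma my_sum_pairs_count {n : ℕ} (hn : 1 ≤ n) (g : Fin n → ℝ) :
    ∑ i, ∑ j ∈ Finset.Ioi i, (g i + g j) = ((n : ℝ) - 1) * ∑ i, g i := by
  have h1 : ∑ i, ∑ j ∈ Finset.Ioi i, (g i + g j)
      = ∑ i, ((Finset.Ioi i).card : ℝ) * g i + ∑ i, ∑ j ∈ Finset.Ioi i, g j := by
    rw [← Finset.sum_add_distrib]
    refine Finset.sum_congr rfl fun i _ => ?_
    rw [Finset.sum_add_distrib, Finset.sum_const, nsmul_eq_mul]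
  have h2 : ∑ i, ∑ j ∈ Finset.Ioi i, g j = ∑ j, ((Finset.Iio j).card : ℝ) * g j := by
    rw [← my_sum_lt (fun _ j => g j), my_sum_lt_right (fun _ j => g j)]
    refine Finset.sum_congr rfl fun j _ => ?_
    rw [Finset.sum_const, nsmul_eq_mul]
  rw [h1, h2, ← Finset.sum_add_distrib, Finset.mul_sum]
  refine Finset.sum_congr rfl fun i _ => ?_
  rw [← add_mul]
  congr 1
  rw [Fin.card_Ioi, Fin.card_Iio]
  have hi := i.isLt
  have h1 : ((n - 1 - (i : ℕ) : ℕ) : ℝ) = (n : ℝ) - 1 - (i : ℕ) := by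
    have h2 : (i : ℕ) ≤ n - 1 := by omega
    rw [Nat.cast_sub h2, Nat.cast_sub hn]
    norm_num
  rw [h1]
  ring

end Helpers

/-- Baker's archimedean Mahler-type discriminant inequality: if `α` has degree `n ≥ 2`
over a number field `K` with conjugates `α_1, …, α_n` (realized as the roots in `ℂ` of
its minimal polynomial under an archimedean embedding `φ : K →+* ℂ`), and
`N_v = [K_v : ℚ_v]/[K : ℚ]` is the local degree of the corresponding archimedean place
(`[K_v : ℝ] = 1` for a real embedding, `2` for a complex one), then the average over
ordered pairs `i ≠ j` of `log⁺|α_i|_v + log⁺|α_j|_v - log|α_i - α_j|_v`, where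
`|·|_v = |·|^{N_v}`, is at least `-N_v · (log n)/(n-1)`. -/
theorem statement7 (K : Type*) [Field K] [NumberField K] (φ : K →+* ℂ)
    (A : Type*) [Field A] [Algebra K A] (α : A)
    (n : ℕ) (hn : 2 ≤ n) (hdeg : (minpoly K α).natDegree = n)
    (Nv : ℝ)
    (hNv : Nv = (if ∀ x : K, (φ x).im = 0 then 1 else 2) / (Module.finrank ℚ K : ℝ))
    (z : Fin n → ℂ)
    (hz : Multiset.map z Finset.univ.val = ((minpoly K α).map φ).roots) :
    -(Nv * Real.log n / ((n : ℝ) - 1)) ≤ (1 / ((n : ℝ) * (n - 1))) *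
      ∑ ij ∈ Finset.univ.filter (fun ij : Fin n × Fin n => ij.1 ≠ ij.2),
        (max 0 (Nv * Real.log (‖z ij.1‖))
          + max 0 (Nv * Real.log (‖z ij.2‖))
          - Nv * Real.log (‖z ij.1 - z ij.2‖)) := by
  classical
  have hn2 : (2:ℝ) ≤ (n:ℝ) := by exact_mod_cast hn
  have hnpos : (0:ℝ) < (n:ℝ) := by linarith
  have hn1pos : (0:ℝ) < (n:ℝ) - 1 := by linarith
  have hNv0 : 0 ≤ Nv := by
    rw [hNv]
    have h1 : (0:ℝ) < (Module.finrank ℚ K : ℝ) := by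
      exact_mod_cast Module.finrank_pos
    split_ifs <;> positivity
  -- injectivity of `z`
  have hα : IsIntegral K α := by
    by_contra h
    rw [minpoly.eq_zero h] at hdeg
    simp at hdeg
    omega
  have hnodup : (Multiset.map z Finset.univ.val).Nodup := by
    rw [hz]
    have hs : ((minpoly K α).map φ).Separable :=
      Polynomial.Separable.map (minpoly.irreducible hα).separable
    exact Polynomial.nodup_roots hs
  have hinj : Function.Injective z := by
    intro a b hab
    exact Multiset.inj_on_of_nodup_map hnodup a (Finset.mem_val.mpr (Finset.mem_univ a))
      b (Finset.mem_val.mpr (Finset.mem_univ b)) hab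
  have hzsub : ∀ i j : Fin n, i ≠ j → ‖z i - z j‖ ≠ 0 := by
    intro i j h
    simp only [ne_eq, norm_eq_zero, sub_eq_zero]
    exact fun e => h (hinj e)
  -- the local height function
  set M : Fin n → ℝ := fun i => max 1 (‖z i‖) with hM
  have hM1 : ∀ i, (1:ℝ) ≤ M i := fun i => le_max_left _ _
  have hMlog : ∀ i, Real.log (M i) = max 0 (Real.log (‖z i‖)) := by
    intro i
    rcases le_total (‖z i‖) 1 with h | h
    · rw [show M i = 1 from max_eq_left h, Real.log_one,
        max_eq_left (Real.log_nonpos (norm_nonneg _) h)]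
    · rw [show M i = ‖z i‖ from max_eq_right h,
        max_eq_right (Real.log_nonneg h)]
  -- Hadamard applied to the (transposed) Vandermonde matrix
  have hHad := my_hadamard (Matrix.vandermonde z).transpose
  rw [Matrix.det_transpose] at hHad
  have hcol : ∀ j, Real.sqrt (∑ i, ‖(Matrix.vandermonde z).transpose i j‖ ^ 2)
      ≤ Real.sqrt n * M j ^ (n-1) := by
    intro j
    have hterm : ∀ i : Fin n,
        ‖(Matrix.vandermonde z).transpose i j‖ ^ 2 ≤ (M j ^ (n-1)) ^ 2 := by
      intro i
      rw [Matrix.transpose_apply, Matrix.vandermonde_apply, norm_pow, ← pow_mul, ← pow_mul]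
      calc ‖z j‖ ^ ((i:ℕ) * 2)
          ≤ M j ^ ((i:ℕ) * 2) :=
            pow_le_pow_left₀ (norm_nonneg _) (le_max_right _ _) _
        _ ≤ M j ^ ((n-1) * 2) := by
            apply pow_le_pow_right₀ (hM1 j)
            have := i.isLt
            omega
    have hb : ∑ i : Fin n, ‖(Matrix.vandermonde z).transpose i j‖ ^ 2
        ≤ (n : ℝ) * (M j ^ (n-1)) ^ 2 := by
      calc ∑ i : Fin n, ‖(Matrix.vandermonde z).transpose i j‖ ^ 2
          ≤ ∑ _i : Fin n, (M j ^ (n-1)) ^ 2 := Finset.sum_le_sum (fun i _ => hterm i)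
        _ = (n : ℝ) * (M j ^ (n-1)) ^ 2 := by
            rw [Finset.sum_const, Finset.card_univ, Fintype.card_fin, nsmul_eq_mul]
    have hMj0 : (0:ℝ) ≤ M j ^ (n-1) := by positivity
    calc Real.sqrt (∑ i, ‖(Matrix.vandermonde z).transpose i j‖ ^ 2)
        ≤ Real.sqrt ((n : ℝ) * (M j ^ (n-1)) ^ 2) := Real.sqrt_le_sqrt hb
      _ = Real.sqrt n * M j ^ (n-1) := by
          rw [Real.sqrt_mul (le_of_lt hnpos), Real.sqrt_sq hMj0]
  have hprod : ‖(Matrix.vandermonde z).det‖ ≤ ∏ j, (Real.sqrt n * M j ^ (n-1)) :=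
    hHad.trans (Finset.prod_le_prod (fun j _ => Real.sqrt_nonneg _) (fun j _ => hcol j))
  have hdetv : ‖(Matrix.vandermonde z).det‖
      = ∏ i, ∏ j ∈ Finset.Ioi i, ‖z j - z i‖ := by
    rw [Matrix.det_vandermonde, norm_prod]
    exact Finset.prod_congr rfl fun i _ => norm_prod _ _
  -- take logarithms
  have hfac_ne : ∀ i : Fin n, ∀ j ∈ Finset.Ioi i, ‖z j - z i‖ ≠ 0 := by
    intro i j hj
    exact hzsub j i (ne_of_gt (Finset.mem_Ioi.mp hj))
  have hPpos : 0 < ∏ i, ∏ j ∈ Finset.Ioi i, ‖z j - z i‖ := by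
    apply Finset.prod_pos
    intro i _
    apply Finset.prod_pos
    intro j hj
    exact lt_of_le_of_ne (norm_nonneg _) (Ne.symm (hfac_ne i j hj))
  have hlogP : Real.log (∏ i, ∏ j ∈ Finset.Ioi i, ‖z j - z i‖)
      = ∑ i, ∑ j ∈ Finset.Ioi i, Real.log (‖z j - z i‖) := by
    rw [Real.log_prod (fun i _ => Finset.prod_ne_zero_iff.mpr (hfac_ne i))]
    exact Finset.sum_congr rfl fun i _ => Real.log_prod (hfac_ne i)
  have hlogB : Real.log (∏ j, (Real.sqrt n * M j ^ (n-1)))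
      = (n:ℝ) * (Real.log n / 2) + ((n:ℝ) - 1) * ∑ i, Real.log (M i) := by
    have hsqrtpos : (0:ℝ) < Real.sqrt n := Real.sqrt_pos.mpr hnpos
    have hfpos : ∀ j : Fin n, Real.sqrt n * M j ^ (n-1) ≠ 0 := by
      intro j
      have h0 : (0:ℝ) < M j := lt_of_lt_of_le one_pos (hM1 j)
      positivity
    rw [Real.log_prod (fun j _ => hfpos j)]
    have hstep : ∀ j : Fin n, Real.log (Real.sqrt n * M j ^ (n-1))
        = Real.log n / 2 + ((n-1 : ℕ) : ℝ) * Real.log (M j) := by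
      intro j
      have h0 : (0:ℝ) < M j := lt_of_lt_of_le one_pos (hM1 j)
      rw [Real.log_mul (ne_of_gt hsqrtpos) (by positivity),
        Real.log_sqrt (le_of_lt hnpos), Real.log_pow]
    rw [Finset.sum_congr rfl (fun j _ => hstep j), Finset.sum_add_distrib, Finset.sum_const,
      Finset.card_univ, Fintype.card_fin, nsmul_eq_mul, ← Finset.mul_sum]
    have hcast : ((n - 1 : ℕ) : ℝ) = (n:ℝ) - 1 := by
      rw [Nat.cast_sub (by omega)]
      norm_num
    rw [hcast]
  have hkey : ∑ i, ∑ j ∈ Finset.Ioi i, Real.log (‖z j - z i‖)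
      ≤ (n:ℝ) * (Real.log n / 2) + ((n:ℝ) - 1) * ∑ i, Real.log (M i) := by
    rw [← hlogP, ← hlogB]
    exact Real.log_le_log hPpos (hdetv ▸ hprod)
  -- rewrite the target sum
  have hterm : ∀ ij : Fin n × Fin n,
      (max 0 (Nv * Real.log (‖z ij.1‖)) + max 0 (Nv * Real.log (‖z ij.2‖))
        - Nv * Real.log (‖z ij.1 - z ij.2‖))
      = Nv * (Real.log (M ij.1) + Real.log (M ij.2)
          - Real.log (‖z ij.1 - z ij.2‖)) := by
    intro ij
    have hmax : ∀ x : ℝ, max 0 (Nv * x) = Nv * max 0 x := by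
      intro x
      rw [mul_max_of_nonneg _ _ hNv0, mul_zero]
    rw [hMlog, hMlog, hmax, hmax]
    ring
  rw [Finset.sum_congr rfl (fun ij _ => hterm ij), ← Finset.mul_sum]
  -- bound the symmetric sum
  set g : Fin n → Fin n → ℝ := fun i j =>
    Real.log (M i) + Real.log (M j) - Real.log (‖z i - z j‖) with hg
  have hgsymm : ∀ i j, g i j = g j i := by
    intro i j
    simp only [hg]
    rw [norm_sub_rev]
    ring
  have hT := my_sum_offdiag_symm g hgsymm
  have hinner : ∑ i, ∑ j ∈ Finset.Ioi i, g i j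
      = ((n:ℝ) - 1) * ∑ i, Real.log (M i)
        - ∑ i, ∑ j ∈ Finset.Ioi i, Real.log (‖z j - z i‖) := by
    rw [← my_sum_pairs_count (by omega) (fun i => Real.log (M i))]
    rw [← Finset.sum_sub_distrib]
    refine Finset.sum_congr rfl fun i _ => ?_
    rw [← Finset.sum_sub_distrib]
    refine Finset.sum_congr rfl fun j _ => ?_
    simp only [hg]
    rw [norm_sub_rev]
  have hTlb : -((n:ℝ) * Real.log n)
      ≤ ∑ ij ∈ Finset.univ.filter (fun ij : Fin n × Fin n => ij.1 ≠ ij.2), g ij.1 ij.2 := by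
    rw [hT, hinner]
    nlinarith [hkey]
  -- final arithmetic
  have hfinal : (1 / ((n:ℝ) * ((n:ℝ) - 1))) * (Nv * (-((n:ℝ) * Real.log n)))
      ≤ (1 / ((n:ℝ) * ((n:ℝ) - 1))) *
        (Nv * ∑ ij ∈ Finset.univ.filter (fun ij : Fin n × Fin n => ij.1 ≠ ij.2), g ij.1 ij.2) := by
    apply mul_le_mul_of_nonneg_left (mul_le_mul_of_nonneg_left hTlb hNv0)
    positivity
  refine le_trans (le_of_eq ?_) hfinal
  field_simp
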